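/- For every integer j with j ≥ (2δ−2)pq + 1 one has Δ_j ≥ 0. -/

import Mathlib

/-- `Δ_j = 1 + 2j − ⌈jp'/p⌉ − ⌈jq'/q⌉ − ⌈j(pq−2)/(pq−1)⌉`, the increment of the τ-function of
the negative definite Seifert manifold `Σ(−2,(p,p'),(q,q'),(pq−1,pq−2)) = −S³₁(T_{p,q})`. -/
def torusDelta (p q p' q' : ℕ) (j : ℕ) : ℤ :=
  1 + 2 * (j : ℤ) - ⌈((j : ℚ) * (p' : ℚ)) / (p : ℚ)⌉ - ⌈((j : ℚ) * (q' : ℚ)) / (q : ℚ)⌉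
    - ⌈((j : ℚ) * ((p : ℚ) * (q : ℚ) - 2)) / ((p : ℚ) * (q : ℚ) - 1)⌉

set_option maxHeartbeats 1000000 in
/-- for every `j ≥ (2δ−2)pq + 1` one has `Δ_j ≥ 0`. -/
theorem torusDelta_nonneg_tail (p q : ℕ) (hp : 2 ≤ p) (hpq : p < q) (hcop : Nat.Coprime p q)
    (δ : ℕ) (hδ : 2 * δ = (p - 1) * (q - 1))
    (p' : ℕ) (hp'pos : 0 < p') (hp'lt : p' < p) (hp' : p' * q ≡ 1 [MOD p])
    (q' : ℕ) (hq'pos : 0 < q') (hq'lt : q' < q) (hq' : p * q' ≡ 1 [MOD q])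
    (j : ℕ) (hj : (2 * δ - 2) * p * q + 1 ≤ j) :
    0 ≤ torusDelta p q p' q' j := by
  have hq3 : 3 ≤ q := by omega
  -- key identity  p'q + pq' = pq + 1
  have key : (p' : ℤ) * q + p * q' = p * q + 1 := by
    have d1 : (p : ℤ) ∣ ((p':ℤ) * q + p * q' - 1) := by
      have h1 : (p:ℤ) ∣ (1 : ℤ) - (p' * q : ℕ) := by exact_mod_cast hp'.dvd
      push_cast at h1
      have h2 : (p:ℤ) ∣ (p:ℤ) * q' := Dvd.intro _ rfl
      have := dvd_sub h2 h1
      rw [show ((p':ℤ) * q + p * q' - 1) = p * q' - (1 - p' * q) by ring]; exact this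
    have d2 : (q : ℤ) ∣ ((p':ℤ) * q + p * q' - 1) := by
      have h1 : (q:ℤ) ∣ (1 : ℤ) - (p * q' : ℕ) := by exact_mod_cast hq'.dvd
      push_cast at h1
      have h2 : (q:ℤ) ∣ (p':ℤ) * q := Dvd.intro_left _ rfl
      have := dvd_sub h2 h1
      rw [show ((p':ℤ) * q + p * q' - 1) = p' * q - (1 - p * q') by ring]; exact this
    have hcopZ : IsCoprime (p:ℤ) (q:ℤ) := Nat.isCoprime_iff_coprime.mpr hcop
    obtain ⟨k, hk⟩ := hcopZ.mul_dvd d1 d2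
    have e1 : (1:ℤ) ≤ p' := by omega
    have e2 : (1:ℤ) ≤ q' := by omega
    have e3 : (2:ℤ) ≤ p := by omega
    have e4 : (3:ℤ) ≤ q := by omega
    have e5 : (p':ℤ) ≤ (p:ℤ) - 1 := by omega
    have e6 : (q':ℤ) ≤ (q:ℤ) - 1 := by omega
    have hb1 : (0:ℤ) < (p':ℤ) * q + p * q' - 1 := by nlinarith
    have hb2 : (p':ℤ) * q + p * q' - 1 < 2 * ((p:ℤ) * q) := by nlinarith
    have hpq0 : (0:ℤ) < (p:ℤ) * q := by nlinarith
    have hk1 : k = 1 := by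
      have u1 : (p:ℤ) * q * 0 < (p:ℤ) * q * k := by rw [← hk] at *; linarith
      have u2 : (p:ℤ) * q * k < (p:ℤ) * q * 2 := by rw [← hk] at *; linarith
      have v1 := (mul_lt_mul_iff_right₀ hpq0).mp u1
      have v2 := (mul_lt_mul_iff_right₀ hpq0).mp u2
      omega
    rw [hk1, mul_one] at hk
    linarith
  have hP2 : (2:ℚ) ≤ (p:ℚ) := by exact_mod_cast hp
  have hQ3 : (3:ℚ) ≤ (q:ℚ) := by exact_mod_cast hq3
  have hP0 : (0:ℚ) < (p:ℚ) := by linarith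
  have hQ0 : (0:ℚ) < (q:ℚ) := by linarith
  have hPQ1 : (0:ℚ) < (p:ℚ) * q - 1 := by nlinarith
  unfold torusDelta
  set c1 : ℤ := ⌈((j : ℚ) * (p' : ℚ)) / (p : ℚ)⌉ with hc1
  set c2 : ℤ := ⌈((j : ℚ) * (q' : ℚ)) / (q : ℚ)⌉ with hc2
  set c3 : ℤ := ⌈((j : ℚ) * ((p : ℚ) * (q : ℚ) - 2)) / ((p : ℚ) * (q : ℚ) - 1)⌉ with hc3
  have b1 : (c1 : ℚ) * p ≤ (j:ℚ) * p' + p - 1 := by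
    have h := Int.ceil_lt_add_one (((j:ℚ) * (p' : ℚ)) / (p:ℚ))
    rw [← hc1] at h
    have h2 : (c1 : ℚ) * p < (j:ℚ) * p' + p := by
      rw [show ((j:ℚ) * (p':ℚ)) / (p:ℚ) + 1 = ((j:ℚ) * p' + p) / (p:ℚ) by field_simp] at h
      exact (lt_div_iff₀ hP0).mp h
    have h3 : (c1 * p : ℤ) < (j : ℤ) * p' + p := by exact_mod_cast h2
    have h4 : (c1 * p : ℤ) ≤ (j : ℤ) * p' + p - 1 := by omega
    have h5 : (c1 : ℚ) * p ≤ (j:ℚ) * p' + p - 1 := by exact_mod_cast h4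
    exact h5
  have b2 : (c2 : ℚ) * q ≤ (j:ℚ) * q' + q - 1 := by
    have h := Int.ceil_lt_add_one (((j:ℚ) * (q' : ℚ)) / (q:ℚ))
    rw [← hc2] at h
    have h2 : (c2 : ℚ) * q < (j:ℚ) * q' + q := by
      rw [show ((j:ℚ) * (q':ℚ)) / (q:ℚ) + 1 = ((j:ℚ) * q' + q) / (q:ℚ) by field_simp] at h
      exact (lt_div_iff₀ hQ0).mp h
    have h3 : (c2 * q : ℤ) < (j : ℤ) * q' + q := by exact_mod_cast h2
    have h4 : (c2 * q : ℤ) ≤ (j : ℤ) * q' + q - 1 := by omega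
    have h5 : (c2 : ℚ) * q ≤ (j:ℚ) * q' + q - 1 := by exact_mod_cast h4
    exact h5
  have b3 : (c3 : ℚ) * ((p:ℚ) * q - 1) ≤ (j:ℚ) * ((p:ℚ) * q - 2) + (p:ℚ) * q - 2 := by
    have h := Int.ceil_lt_add_one (((j:ℚ) * ((p:ℚ) * q - 2)) / ((p:ℚ) * q - 1))
    rw [← hc3] at h
    have h2 : (c3 : ℚ) * ((p:ℚ) * q - 1) < (j:ℚ) * ((p:ℚ) * q - 2) + ((p:ℚ) * q - 1) := by
      rw [show ((j:ℚ) * ((p:ℚ) * q - 2)) / ((p:ℚ) * q - 1) + 1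
          = ((j:ℚ) * ((p:ℚ) * q - 2) + ((p:ℚ) * q - 1)) / ((p:ℚ) * q - 1) by field_simp] at h
      exact (lt_div_iff₀ hPQ1).mp h
    have h3 : (c3 * ((p:ℤ) * q - 1) : ℤ) < (j : ℤ) * ((p:ℤ) * q - 2) + ((p:ℤ) * q - 1) := by
      have : ((c3 * ((p:ℤ) * q - 1) : ℤ) : ℚ) < (((j : ℤ) * ((p:ℤ) * q - 2) + ((p:ℤ) * q - 1) : ℤ) : ℚ) := by
        push_cast; linarith
      exact_mod_cast this
    have h4 : (c3 * ((p:ℤ) * q - 1) : ℤ) ≤ (j : ℤ) * ((p:ℤ) * q - 2) + ((p:ℤ) * q - 1) - 1 := by omega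
    have h5 : ((c3 * ((p:ℤ) * q - 1) : ℤ) : ℚ) ≤ (((j : ℤ) * ((p:ℤ) * q - 2) + ((p:ℤ) * q - 1) - 1 : ℤ) : ℚ) := by
      exact_mod_cast h4
    push_cast at h5
    linarith
  have h2δ : 2 ≤ 2 * δ := by
    rw [hδ]
    calc 2 = 1 * 2 := by norm_num
    _ ≤ (p-1) * (q-1) := Nat.mul_le_mul (by omega) (by omega)
  have hJb : (((p:ℚ) - 1) * ((q:ℚ) - 1) - 2) * p * q + 1 ≤ (j:ℚ) := by
    have hcast : ((2 * δ - 2 : ℕ) : ℚ) = ((p:ℚ) - 1) * ((q:ℚ) - 1) - 2 := by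
      have h1 : ((2 * δ - 2 : ℕ) : ℚ) = ((2 * δ : ℕ) : ℚ) - 2 := by
        push_cast [Nat.cast_sub h2δ]; ring
      rw [h1, hδ]
      push_cast [Nat.cast_sub (by omega : 1 ≤ p), Nat.cast_sub (by omega : 1 ≤ q)]
      ring
    have hh := (Nat.cast_le (α := ℚ)).mpr hj
    push_cast at hh
    rw [hcast] at hh
    linarith
  have keyQ : (p' : ℚ) * q + (p:ℚ) * q' = (p:ℚ) * q + 1 := by exact_mod_cast key
  have main : (-1 : ℚ) < 1 + 2 * (j:ℚ) - c1 - c2 - c3 := by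
    have hJ0 : (0:ℚ) ≤ (j:ℚ) := Nat.cast_nonneg j
    have m1 := mul_le_mul_of_nonneg_right b1 (le_of_lt (mul_pos hQ0 hPQ1))
    have m2 := mul_le_mul_of_nonneg_right b2 (le_of_lt (mul_pos hP0 hPQ1))
    have m3 := mul_le_mul_of_nonneg_right b3 (le_of_lt (mul_pos hP0 hQ0))
    have identJ : (j:ℚ) * ((p:ℚ) * q - 1) * ((p':ℚ) * q + (p:ℚ) * q') = (j:ℚ) * ((p:ℚ) * q - 1) * ((p:ℚ) * q + 1) := by
      rw [keyQ]
    have hfac : (2:ℚ) ≤ ((p:ℚ) - 1) * ((q:ℚ) - 1) := by nlinarith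
    nlinarith [m1, m2, m3, identJ, hJb, hfac, mul_pos (mul_pos hP0 hQ0) hPQ1]
  have hZ : (-1 : ℤ) < 1 + 2 * (j:ℤ) - c1 - c2 - c3 := by exact_mod_cast main
  omega
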